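/- Let (Ω, ℱ, P) be a probability space, X : Ω → ℝ^m and Y : Ω → ℝ random variables, and δ : Ω → {0,1} a random indicator. Suppose E[δ | X, Y] = π(X) almost surely for some measurable function π : ℝ^m → [0,1] (the missing-at-random assumption), and suppose e = g(X,Y) for some measurable g : ℝ^m × ℝ → ℝ is a random variable independent of X. Then for every bounded measurable function h : ℝ → ℝ one has E[δ h(e) | X] = π(X) · E[h(e)] almost surely. -/

import Mathlib

open MeasureTheory ProbabilityTheory

set_option maxHeartbeats 1000000 in
/-- Under the missing-at-random assumption `E[δ | X, Y] = π(X)` a.s. and independence of the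
error `e = g(X, Y)` from the covariate `X`, for every bounded measurable `h : ℝ → ℝ` one has
`E[δ h(e) | X] = π(X) ⬝ E[h(e)]` almost surely. -/
theorem condExp_delta_mul_of_MAR
    {Ω : Type*} [MeasurableSpace Ω] (P : Measure Ω) [IsProbabilityMeasure P]
    {m : ℕ} (X : Ω → (Fin m → ℝ)) (Y : Ω → ℝ) (δ : Ω → ℝ)
    (hX : Measurable X) (hY : Measurable Y) (hδ : Measurable δ)
    (hδ01 : ∀ ω, δ ω = 0 ∨ δ ω = 1)
    (π : (Fin m → ℝ) → ℝ) (hπ : Measurable π)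
    (hπ01 : ∀ x, π x ∈ Set.Icc (0 : ℝ) 1)
    (hMAR : P[δ | MeasurableSpace.comap (fun ω => (X ω, Y ω)) inferInstance]
      =ᵐ[P] fun ω => π (X ω))
    (g : (Fin m → ℝ) × ℝ → ℝ) (hg : Measurable g)
    (e : Ω → ℝ) (he : ∀ ω, e ω = g (X ω, Y ω))
    (hindep : IndepFun e X P)
    (h : ℝ → ℝ) (hh : Measurable h) (hbd : ∃ C, ∀ x, |h x| ≤ C) :
    P[fun ω => δ ω * h (e ω) | MeasurableSpace.comap X inferInstance]
      =ᵐ[P] fun ω => π (X ω) * ∫ ω', h (e ω') ∂P := by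
  obtain ⟨C, hC⟩ := hbd
  rename_i mΩ hPP
  -- notation
  let mG : MeasurableSpace Ω := MeasurableSpace.comap X inferInstance
  let mH : MeasurableSpace Ω := MeasurableSpace.comap (fun ω => (X ω, Y ω)) inferInstance
  have hH_le : mH ≤ mΩ := (hX.prodMk hY).comap_le
  have hG_le : mG ≤ mΩ := hX.comap_le
  have hGH : mG ≤ mH := by
    intro s hs
    obtain ⟨t, ht, rfl⟩ := hs
    refine ⟨t ×ˢ Set.univ, ht.prod MeasurableSet.univ, ?_⟩
    ext ω; simp
  -- measurability of pieces w.r.t. the sub-σ-algebras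
  have hpair_meas : Measurable[mH] (fun ω => (X ω, Y ω)) :=
    Measurable.of_comap_le le_rfl
  have hX_meas : Measurable[mG] X := Measurable.of_comap_le le_rfl
  have he_measH : Measurable[mH] e := by
    have h1 : Measurable[mH] (fun ω => g (X ω, Y ω)) := hg.comp hpair_meas
    simpa [funext he] using h1
  have hhe_measH : StronglyMeasurable[mH] (fun ω => h (e ω)) :=
    ((hh.comp he_measH)).stronglyMeasurable
  have hπX_measG : StronglyMeasurable[mG] (fun ω => π (X ω)) :=
    (hπ.comp hX_meas).stronglyMeasurable
  -- boundedness / integrability facts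
  have hδbd : ∀ ω, |δ ω| ≤ 1 := by
    intro ω; rcases hδ01 ω with h0 | h1
    · simp [h0]
    · simp [h1]
  have he_meas : Measurable[mΩ] e := he_measH.mono hH_le le_rfl
  have hhe_meas : Measurable[mΩ] (fun ω => h (e ω)) := hh.comp he_meas
  have hδ_int : Integrable δ P := by
    refine ⟨hδ.aestronglyMeasurable, ?_⟩
    exact (hasFiniteIntegral_const (1 : ℝ)).mono' (Filter.Eventually.of_forall fun ω => by
      simpa using hδbd ω)
  have hhe_int : Integrable (fun ω => h (e ω)) P := by
    refine ⟨hhe_meas.aestronglyMeasurable, ?_⟩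
    exact (hasFiniteIntegral_const C).mono' (Filter.Eventually.of_forall fun ω => by
      simpa using hC (e ω))
  have hprod_int : Integrable (fun ω => h (e ω) * δ ω) P := by
    refine ⟨(hhe_meas.mul hδ).aestronglyMeasurable, ?_⟩
    refine (hasFiniteIntegral_const C).mono' (Filter.Eventually.of_forall fun ω => ?_)
    calc ‖h (e ω) * δ ω‖ = |h (e ω)| * |δ ω| := by simp [abs_mul]
      _ ≤ C * 1 := mul_le_mul (hC _) (hδbd _) (abs_nonneg _) ((abs_nonneg (h (e ω))).trans (hC (e ω)))
      _ = C := mul_one C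
  have hπX_meas : Measurable[mΩ] (fun ω => π (X ω)) := hπ.comp hX
  have hπhe_int : Integrable (fun ω => π (X ω) * h (e ω)) P := by
    refine ⟨(hπX_meas.mul hhe_meas).aestronglyMeasurable, ?_⟩
    refine (hasFiniteIntegral_const C).mono' (Filter.Eventually.of_forall fun ω => ?_)
    have hπ1 : |π (X ω)| ≤ 1 := by
      have h2 := hπ01 (X ω); rw [abs_le]
      exact ⟨by linarith [h2.1], h2.2⟩
    calc ‖π (X ω) * h (e ω)‖ = |π (X ω)| * |h (e ω)| := by simp [abs_mul]
      _ ≤ 1 * C := mul_le_mul hπ1 (hC _) (abs_nonneg _) zero_le_one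
      _ = C := one_mul C
  haveI : SigmaFinite (P.trim hH_le) :=
    haveI : IsFiniteMeasure (P.trim hH_le) := isFiniteMeasure_trim hH_le
    inferInstance
  haveI : SigmaFinite (P.trim hG_le) :=
    haveI : IsFiniteMeasure (P.trim hG_le) := isFiniteMeasure_trim hG_le
    inferInstance
  -- Step 1: tower property
  have step1 : P[fun ω => δ ω * h (e ω) | mG]
      =ᵐ[P] P[P[fun ω => δ ω * h (e ω) | mH] | mG] :=
    (condExp_condExp_of_le hGH hH_le).symm
  -- Step 2: pull out h(e) at level mH
  have step2 : P[fun ω => δ ω * h (e ω) | mH]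
      =ᵐ[P] fun ω => h (e ω) * (P[δ | mH]) ω := by
    have h3 := condExp_mul_of_stronglyMeasurable_left (μ := P) hhe_measH
      (by exact hprod_int) hδ_int
    refine (condExp_congr_ae (Filter.Eventually.of_forall fun ω => ?_)).trans h3
    exact (mul_comm (h (e ω)) (δ ω)).symm
  -- Step 3: substitute MAR
  have step3 : (fun ω => h (e ω) * (P[δ | mH]) ω)
      =ᵐ[P] fun ω => π (X ω) * h (e ω) := by
    filter_upwards [hMAR] with ω hω
    simp only [mH]
    rw [hω, mul_comm]
  -- combine steps 2, 3 under the outer condexp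
  have step23 : P[P[fun ω => δ ω * h (e ω) | mH] | mG]
      =ᵐ[P] P[fun ω => π (X ω) * h (e ω) | mG] :=
    condExp_congr_ae (step2.trans step3)
  -- Step 4: pull out π(X) at level mG
  have step4 : P[fun ω => π (X ω) * h (e ω) | mG]
      =ᵐ[P] fun ω => π (X ω) * (P[fun ω' => h (e ω') | mG]) ω :=
    condExp_mul_of_stronglyMeasurable_left (μ := P) hπX_measG
      (by exact hπhe_int) hhe_int
  -- Step 5: independence
  have step5 : P[fun ω' => h (e ω') | mG] =ᵐ[P] fun _ => ∫ ω', h (e ω') ∂P := by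
    refine condExp_indep_eq (μ := P) (m₁ := MeasurableSpace.comap e inferInstance)
      (m₂ := mG) he_meas.comap_le hG_le ?_ hindep
    exact (hh.comp (Measurable.of_comap_le le_rfl)).stronglyMeasurable
  calc P[fun ω => δ ω * h (e ω) | mG]
      =ᵐ[P] P[P[fun ω => δ ω * h (e ω) | mH] | mG] := step1
    _ =ᵐ[P] P[fun ω => π (X ω) * h (e ω) | mG] := step23
    _ =ᵐ[P] fun ω => π (X ω) * (P[fun ω' => h (e ω') | mG]) ω := step4
    _ =ᵐ[P] fun ω => π (X ω) * ∫ ω', h (e ω') ∂P := by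
        filter_upwards [step5] with ω hω; rw [hω]
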